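/- Let α ∈ [0,1] and suppose β₁, β₂, β₃, β₄ ∈ ℝ satisfy: α·β₁ = (1−α)(3/10 − β₁) + α(β₂ − β₁); (1−α)(β₂ − 3/10) + α(β₂ − β₁) = (1−α)(1/2 − β₂) + α(β₃ − β₂); (1−α)(β₃ − 1/2) + α(β₃ − β₂) = (1−α)(7/10 − β₃) + α(β₄ − β₃); and (1−α)(β₄ − 7/10) + α(β₄ − β₃) = (1−α)(9/10 − β₄) + α(1 − β₄). Then 5·β₁ = (12 + α(4 + α(α(α−2) − 10))) / (8 + α(2+α)(4 + (α−6)·α)). -/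

import Mathlib

theorem stmt_7 (α β₁ β₂ β₃ β₄ : ℝ) (hα0 : 0 ≤ α) (hα1 : α ≤ 1)
    (h1 : α * β₁ = (1 - α) * (3/10 - β₁) + α * (β₂ - β₁))
    (h2 : (1 - α) * (β₂ - 3/10) + α * (β₂ - β₁)
        = (1 - α) * (1/2 - β₂) + α * (β₃ - β₂))
    (h3 : (1 - α) * (β₃ - 1/2) + α * (β₃ - β₂)
        = (1 - α) * (7/10 - β₃) + α * (β₄ - β₃))
    (h4 : (1 - α) * (β₄ - 7/10) + α * (β₄ - β₃)
        = (1 - α) * (9/10 - β₄) + α * (1 - β₄)) :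
    5 * β₁ = (12 + α * (4 + α * (α * (α - 2) - 10)))
        / (8 + α * (2 + α) * (4 + (α - 6) * α)) := by
  have hD : 8 + α * (2 + α) * (4 + (α - 6) * α) ≠ 0 := by
    nlinarith [sq_nonneg α, sq_nonneg (α - 1), sq_nonneg (α*α), sq_nonneg (α*(α-1))]
  rw [eq_div_iff hD]
  linear_combination (5*(8 - 4*α^2)) * h1 + (5*(4*α - α^3)) * h2
    + (10*α^2) * h3 + (5*α^3) * h4
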